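/- Let M be a finite matroid and N a minor of M (i.e., N = M/C∖D for some disjoint sets C, D ⊆ E(M)). Then the path-width of N is at most the path-width of M, that is, pw(N) ≤ pw(M). -/

import Mathlib

/-- A finite matroid on ground set `E`, given by its rank function, which satisfies
`r ∅ = 0`, the unit-increase property, and submodularity (on subsets of `E`). -/
structure FinMatroid (α : Type*) [DecidableEq α] where
  E : Finset α
  r : Finset α → ℕ
  r_empty : r ∅ = 0
  r_le_insert : ∀ X ⊆ E, ∀ e ∈ E, r X ≤ r (insert e X)
  r_insert_le : ∀ X ⊆ E, ∀ e ∈ E, r (insert e X) ≤ r X + 1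
  r_submod : ∀ X ⊆ E, ∀ Y ⊆ E, r (X ∪ Y) + r (X ∩ Y) ≤ r X + r Y

namespace FinMatroid

variable {α : Type*} [DecidableEq α]

/-- A set is independent if it is a subset of the ground set whose rank equals its
cardinality. -/
def Indep (M : FinMatroid α) (X : Finset α) : Prop :=
  X ⊆ M.E ∧ M.r X = X.card

/-- A set is dependent if it is a subset of the ground set that is not independent. -/
def Dep (M : FinMatroid α) (X : Finset α) : Prop :=
  X ⊆ M.E ∧ M.r X ≠ X.card

/-- A circuit is a minimal dependent set: a dependent set all of whose proper subsets
are independent. -/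
def Circuit (M : FinMatroid α) (C : Finset α) : Prop :=
  M.Dep C ∧ ∀ C' ⊂ C, M.Indep C'

/-- The connectivity function `λ_M(X) = r(X) + r(E \ X) - r(E)`. -/
def lambda (M : FinMatroid α) (X : Finset α) : ℤ :=
  (M.r X : ℤ) + (M.r (M.E \ X) : ℤ) - (M.r M.E : ℤ)

/-- `μ_M(X, A) = r(X ∪ A) + r((E \ X) ∪ A) - r(E)`. -/
def mu (M : FinMatroid α) (X A : Finset α) : ℤ :=
  (M.r (X ∪ A) : ℤ) + (M.r ((M.E \ X) ∪ A) : ℤ) - (M.r M.E : ℤ)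

/-- The closure `cl_M(X) = {e ∈ E : r(X ∪ {e}) = r(X)}`. -/
def cl (M : FinMatroid α) (X : Finset α) : Finset α :=
  M.E.filter fun e => M.r (insert e X) = M.r X

/-- The width of the path-decomposition (ordering) given by the list `L`:
the maximum of `λ_M({e₁, …, e_i})` over the nonempty prefixes of `L`. -/
def pdWidth (M : FinMatroid α) (L : List α) : ℤ :=
  ((List.range L.length).map fun i => M.lambda (L.take (i + 1)).toFinset).foldr max 0

/-- The path-width of a matroid: the minimum width over all orderings of the ground
set. -/
noncomputable def pathwidth (M : FinMatroid α) : ℤ :=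
  sInf (M.pdWidth '' { L : List α | L.Nodup ∧ L.toFinset = M.E })

end FinMatroid

section Aux

variable {α : Type*} [DecidableEq α]

private lemma foldr_max_nonneg (l : List ℤ) : 0 ≤ l.foldr max 0 := by
  induction l with
  | nil => simp
  | cons a l ih => exact le_trans ih (le_max_right _ _)

private lemma le_foldr_max {l : List ℤ} {a : ℤ} (h : a ∈ l) : a ≤ l.foldr max 0 := by
  induction l with
  | nil => simp at h
  | cons b l ih =>
    rcases List.mem_cons.mp h with rfl | h
    · exact le_max_left _ _
    · exact le_trans (ih h) (le_max_right _ _)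

private lemma foldr_max_le {l : List ℤ} {c : ℤ} (hc : 0 ≤ c) (h : ∀ a ∈ l, a ≤ c) :
    l.foldr max 0 ≤ c := by
  induction l with
  | nil => simpa
  | cons a l ih =>
    exact max_le (h a (by simp)) (ih fun b hb => h b (List.mem_cons_of_mem _ hb))

private lemma exists_take_filter (p : α → Bool) :
    ∀ (L : List α) (k : ℕ), k ≤ (L.filter p).length →
      ∃ j ≤ L.length, (L.take j).filter p = (L.filter p).take k ∧ (k ≠ 0 → j ≠ 0) := by
  intro L
  induction L with
  | nil =>
    intro k hk
    simp only [List.filter_nil, List.length_nil, Nat.le_zero] at hk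
    subst hk
    exact ⟨0, le_refl _, by simp, fun h => absurd rfl h⟩
  | cons a L ih =>
    intro k hk
    match k with
    | 0 => exact ⟨0, by simp, by simp, fun h => absurd rfl h⟩
    | (k + 1) =>
      by_cases hpa : p a
      · rw [List.filter_cons_of_pos hpa] at hk ⊢
        obtain ⟨j, hj, hfil, _⟩ := ih k (by simpa using hk)
        refine ⟨j + 1, by simpa using hj, ?_, fun _ => by omega⟩
        simp only [List.take_succ_cons, List.filter_cons_of_pos hpa, hfil]
      · rw [List.filter_cons_of_neg hpa] at hk ⊢
        obtain ⟨j, hj, hfil, _⟩ := ih (k + 1) hk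
        refine ⟨j + 1, by simpa using hj, ?_, fun _ => by omega⟩
        simp only [List.take_succ_cons, List.filter_cons_of_neg hpa, hfil]

private lemma r_union_mono (M : FinMatroid α) (X : Finset α) (hX : X ⊆ M.E) :
    ∀ S ⊆ M.E, M.r X ≤ M.r (X ∪ S) := by
  intro S
  induction S using Finset.induction_on with
  | empty => simp
  | insert a S ha ih =>
    intro hS
    have haE : a ∈ M.E := hS (Finset.mem_insert_self a S)
    have hSE : S ⊆ M.E := fun x hx => hS (Finset.mem_insert_of_mem hx)
    have h1 := ih hSE
    have h2 := M.r_le_insert (X ∪ S) (Finset.union_subset hX hSE) a haE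
    rw [Finset.union_insert]
    exact le_trans h1 h2

private lemma r_mono (M : FinMatroid α) {X Y : Finset α} (hY : Y ⊆ M.E) (hXY : X ⊆ Y) :
    M.r X ≤ M.r Y := by
  have h := r_union_mono M X (hXY.trans hY) (Y \ X) ((Finset.sdiff_subset).trans hY)
  rwa [Finset.union_sdiff_of_subset hXY] at h

set_option maxHeartbeats 2000000 in
private lemma lambda_inter_le (M N : FinMatroid α)
    (C D : Finset α) (hC : C ⊆ M.E) (hD : D ⊆ M.E) (hCD : Disjoint C D)
    (hNE : N.E = (M.E \ C) \ D)
    (hNr : ∀ Y ⊆ N.E, N.r Y = M.r (Y ∪ C) - M.r C)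
    (P : Finset α) (hP : P ⊆ M.E) :
    N.lambda (P ∩ N.E) ≤ M.lambda P := by
  classical
  have hNEsub : N.E ⊆ M.E := by
    rw [hNE]; exact (Finset.sdiff_subset).trans Finset.sdiff_subset
  have hrX := hNr (P ∩ N.E) Finset.inter_subset_right
  have hrB := hNr (N.E \ (P ∩ N.E)) Finset.sdiff_subset
  have hrE := hNr N.E (le_refl _)
  have hCmem : ∀ a, a ∈ C → a ∈ M.E := fun a ha => hC ha
  have hDmem : ∀ a, a ∈ D → a ∈ M.E := fun a ha => hD ha
  have hCDmem : ∀ a, a ∈ C → a ∉ D := fun a ha => Finset.disjoint_left.mp hCD ha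
  have hPmem : ∀ a, a ∈ P → a ∈ M.E := fun a ha => hP ha
  have hNmem : ∀ a, a ∈ N.E ↔ a ∈ M.E ∧ a ∉ C ∧ a ∉ D := by
    intro a; rw [hNE]; simp only [Finset.mem_sdiff]; tauto
  -- set identities
  have e0 : N.E ∪ C = M.E \ D := by
    clear hrX hrB hrE hNr hNE hCD hNEsub
    ext a
    have h1 := hCmem a; have h2 := hDmem a; have h3 := hCDmem a
    simp only [Finset.mem_union, Finset.mem_sdiff, hNmem]
    tauto
  have e1 : (P ∪ C) ∪ (N.E ∪ C) = M.E \ (D \ P) := by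
    clear hrX hrB hrE hNr hNE hCD hNEsub
    ext a
    have h1 := hCmem a; have h2 := hDmem a; have h3 := hCDmem a
    have h4 := hPmem a
    simp only [Finset.mem_union, Finset.mem_sdiff, hNmem]
    tauto
  have e2 : (P ∪ C) ∩ (N.E ∪ C) = (P ∩ N.E) ∪ C := by
    clear hrX hrB hrE hNr hNE hCD hNEsub
    ext a
    have h1 := hCmem a
    simp only [Finset.mem_union, Finset.mem_inter, hNmem]
    tauto
  have e3 : ((M.E \ P) ∪ C) ∪ (N.E ∪ C) = M.E \ (D ∩ P) := by
    clear hrX hrB hrE hNr hNE hCD hNEsub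
    ext a
    have h1 := hCmem a; have h2 := hDmem a; have h3 := hCDmem a
    have h4 := hPmem a
    simp only [Finset.mem_union, Finset.mem_sdiff, Finset.mem_inter, hNmem]
    tauto
  have e4 : ((M.E \ P) ∪ C) ∩ (N.E ∪ C) = (N.E \ (P ∩ N.E)) ∪ C := by
    clear hrX hrB hrE hNr hNE hCD hNEsub
    ext a
    have h1 := hCmem a
    simp only [Finset.mem_union, Finset.mem_inter, Finset.mem_sdiff, hNmem]
    tauto
  have e5 : (M.E \ (D \ P)) ∪ (M.E \ (D ∩ P)) = M.E := by
    clear hrX hrB hrE hNr hNE hCD hNEsub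
    ext a
    simp only [Finset.mem_union, Finset.mem_sdiff, Finset.mem_inter]
    tauto
  have e6 : (M.E \ (D \ P)) ∩ (M.E \ (D ∩ P)) = M.E \ D := by
    clear hrX hrB hrE hNr hNE hCD hNEsub
    ext a
    simp only [Finset.mem_union, Finset.mem_sdiff, Finset.mem_inter]
    tauto
  have e7 : (P ∩ C) ∪ ((M.E \ P) ∩ C) = C := by
    clear hrX hrB hrE hNr hNE hCD hNEsub
    ext a
    have h1 := hCmem a
    simp only [Finset.mem_union, Finset.mem_sdiff, Finset.mem_inter]
    tauto
  have e8 : (P ∩ C) ∩ ((M.E \ P) ∩ C) = (∅ : Finset α) := by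
    clear hrX hrB hrE hNr hNE hCD hNEsub
    ext a
    simp only [Finset.mem_inter, Finset.mem_sdiff, Finset.notMem_empty, iff_false]
    tauto
  -- submodularity instances
  have hPC : P ∪ C ⊆ M.E := Finset.union_subset hP hC
  have hNC : N.E ∪ C ⊆ M.E := Finset.union_subset hNEsub hC
  have hQ : M.E \ P ⊆ M.E := Finset.sdiff_subset
  have hQC : (M.E \ P) ∪ C ⊆ M.E := Finset.union_subset hQ hC
  have s1 := M.r_submod (P ∪ C) hPC (N.E ∪ C) hNC
  rw [e1, e2] at s1
  have s2 := M.r_submod ((M.E \ P) ∪ C) hQC (N.E ∪ C) hNC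
  rw [e3, e4] at s2
  have s3 := M.r_submod (M.E \ (D \ P)) Finset.sdiff_subset (M.E \ (D ∩ P)) Finset.sdiff_subset
  rw [e5, e6, ← e0] at s3
  have s4 := M.r_submod P hP C hC
  have s5 := M.r_submod (M.E \ P) hQ C hC
  have s6 := M.r_submod (P ∩ C) ((Finset.inter_subset_left).trans hP)
      ((M.E \ P) ∩ C) ((Finset.inter_subset_left).trans hQ)
  rw [e7, e8, M.r_empty] at s6
  -- monotonicity facts to deal with natural subtraction
  have m1 : M.r C ≤ M.r ((P ∩ N.E) ∪ C) :=
    r_mono M (Finset.union_subset ((Finset.inter_subset_right).trans hNEsub) hC)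
      Finset.subset_union_right
  have m2 : M.r C ≤ M.r ((N.E \ (P ∩ N.E)) ∪ C) :=
    r_mono M (Finset.union_subset ((Finset.sdiff_subset).trans hNEsub) hC)
      Finset.subset_union_right
  have m3 : M.r C ≤ M.r (N.E ∪ C) := r_mono M hNC Finset.subset_union_right
  unfold FinMatroid.lambda
  rw [hrX, hrB, hrE]
  omega

private lemma pdWidth_filter_le (M N : FinMatroid α)
    (C D : Finset α) (hC : C ⊆ M.E) (hD : D ⊆ M.E) (hCD : Disjoint C D)
    (hNE : N.E = (M.E \ C) \ D)
    (hNr : ∀ Y ⊆ N.E, N.r Y = M.r (Y ∪ C) - M.r C)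
    (L : List α) (hL : L.toFinset = M.E) :
    N.pdWidth (L.filter (fun a => decide (a ∈ N.E))) ≤ M.pdWidth L := by
  classical
  unfold FinMatroid.pdWidth
  apply foldr_max_le (foldr_max_nonneg _)
  intro a ha
  simp only [List.mem_map, List.mem_range] at ha
  obtain ⟨i, hi, rfl⟩ := ha
  obtain ⟨j, hjle, hfil, hj0⟩ :=
    exists_take_filter (fun a => decide (a ∈ N.E)) L (i + 1) (by omega)
  have hj : j ≠ 0 := hj0 (by omega)
  obtain ⟨j', rfl⟩ := Nat.exists_eq_succ_of_ne_zero hj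
  have hPsub : (L.take (j' + 1)).toFinset ⊆ M.E := by
    rw [← hL]
    intro x hx
    rw [List.mem_toFinset] at *
    exact (List.take_sublist _ _).subset hx
  have hTF : ((L.filter (fun a => decide (a ∈ N.E))).take (i + 1)).toFinset
      = (L.take (j' + 1)).toFinset ∩ N.E := by
    rw [← hfil]
    ext x
    simp only [List.mem_toFinset, List.mem_filter, decide_eq_true_eq, Finset.mem_inter]
  rw [hTF]
  refine le_trans (lambda_inter_le M N C D hC hD hCD hNE hNr _ hPsub) (le_foldr_max ?_)
  simp only [List.mem_map, List.mem_range]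
  exact ⟨j', by omega, rfl⟩

end Aux

open FinMatroid in
/-- If `N = M / C \ D` is a minor of the finite matroid `M` (contraction of `C` and
deletion of `D`, so that `N` has ground set `(E(M) \ C) \ D` and rank function
`r_N(Y) = r_M(Y ∪ C) - r_M(C)`), then `pw(N) ≤ pw(M)`. -/
theorem pathwidth_minor_le {α : Type*} [DecidableEq α] (M N : FinMatroid α)
    (C D : Finset α) (hC : C ⊆ M.E) (hD : D ⊆ M.E) (hCD : Disjoint C D)
    (hNE : N.E = (M.E \ C) \ D)
    (hNr : ∀ Y ⊆ N.E, N.r Y = M.r (Y ∪ C) - M.r C) :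
    N.pathwidth ≤ M.pathwidth := by
  classical
  have hNEsub : N.E ⊆ M.E := by
    rw [hNE]; exact (Finset.sdiff_subset).trans Finset.sdiff_subset
  unfold FinMatroid.pathwidth
  apply le_csInf
  · exact ⟨M.pdWidth M.E.toList,
      ⟨M.E.toList, ⟨M.E.nodup_toList, M.E.toList_toFinset⟩, rfl⟩⟩
  · rintro b ⟨L, ⟨hnd, hTF⟩, rfl⟩
    have hmem : N.pdWidth (L.filter (fun a => decide (a ∈ N.E)))
        ∈ N.pdWidth '' { L : List α | L.Nodup ∧ L.toFinset = N.E } := by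
      refine ⟨_, ⟨hnd.filter _, ?_⟩, rfl⟩
      ext x
      simp only [List.mem_toFinset, List.mem_filter, decide_eq_true_eq]
      constructor
      · rintro ⟨-, h⟩; exact h
      · intro h
        refine ⟨?_, h⟩
        rw [← List.mem_toFinset, hTF]
        exact hNEsub h
    have hbdd : BddBelow (N.pdWidth '' { L : List α | L.Nodup ∧ L.toFinset = N.E }) := by
      refine ⟨0, ?_⟩
      rintro x ⟨L', -, rfl⟩
      exact foldr_max_nonneg _
    exact le_trans (csInf_le hbdd hmem)
      (pdWidth_filter_le M N C D hC hD hCD hNE hNr L hTF)
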